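/- An allocation X = (X_1,...,X_n) of items among n agents with monotone valuations is envy-freeable (i.e., there exists a nonnegative subsidy vector p such that v_i(X_i) + p_i ≥ v_i(X_j) + p_j for all i,j) if and only if X is locally efficient (i.e., for every permutation π of [n], Σ_i v_i(X_i) ≥ Σ_i v_{π(i)}(X_i)). -/

import Mathlib

open Finset

namespace EnvyFree

variable {n : ℕ}

/-- weight of the first `k` steps of the walk `g` -/
noncomputable def W (c : Fin n → Fin n → ℝ) (g : ℕ → Fin n) (k : ℕ) : ℝ :=
  ∑ t ∈ Finset.range k, c (g t) (g (t + 1))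

/-- extend a finitely-indexed walk to ℕ -/
def ext (h : Fin (n + 1) → Fin n) : ℕ → Fin n :=
  fun t => h ⟨min t n, Nat.lt_succ_of_le (Nat.min_le_right t n)⟩

lemma ext_eq (h : Fin (n + 1) → Fin n) {t : ℕ} (ht : t ≤ n) :
    ext h t = h ⟨t, Nat.lt_succ_of_le ht⟩ := by
  simp [ext, Nat.min_eq_left ht]

/-- candidate subsidy values: weights of walks of length ≤ n starting at i -/
noncomputable def S (c : Fin n → Fin n → ℝ) (i : Fin n) : Finset ℝ :=
  (Finset.range (n + 1) ×ˢ (Finset.univ : Finset (Fin (n + 1) → Fin n))).image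
    (fun q => if ext q.2 0 = i then W c (ext q.2) q.1 else 0)

noncomputable def p (c : Fin n → Fin n → ℝ) (i : Fin n) : ℝ :=
  (insert (0 : ℝ) (S c i)).max' (Finset.insert_nonempty _ _)

lemma p_nonneg (c : Fin n → Fin n → ℝ) (i : Fin n) : 0 ≤ p c i :=
  Finset.le_max' _ _ (Finset.mem_insert_self _ _)

/-- any simple cycle has nonpositive weight -/
lemma cycle_nonpos (c : Fin n → Fin n → ℝ) (hc : ∀ i, c i i = 0)
    (hLE : ∀ σ : Equiv.Perm (Fin n), ∑ j, c j (σ j) ≤ 0)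
    (g : ℕ → Fin n) (b : ℕ) (hb : 0 < b)
    (hinj : ∀ s t, s < b → t < b → g s = g t → s = t)
    (hcyc : g b = g 0) :
    ∑ t ∈ Finset.range b, c (g t) (g (t + 1)) ≤ 0 := by
  set l : List (Fin n) := (List.range b).map g with hl
  have hlen : l.length = b := by simp [hl]
  have hnd : l.Nodup := by
    refine List.Nodup.map_on ?_ (List.nodup_range)
    intro s hs t ht hst
    exact hinj s t (List.mem_range.mp hs) (List.mem_range.mp ht) hst
  set σ := l.formPerm with hσ
  have hget : ∀ t (ht : t < b), l[t]'(by omega) = g t := by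
    intro t ht
    simp [hl]
  have happ : ∀ t, t < b → σ (g t) = g (t + 1) := by
    intro t ht
    have h1 : σ (l[t]'(by omega)) = l[(t + 1) % l.length]'(Nat.mod_lt _ (by omega)) :=
      List.formPerm_apply_getElem l hnd t (by omega)
    rw [hget t ht] at h1
    rw [h1]
    rcases Nat.lt_or_ge (t + 1) b with h | h
    · simp only [hl, List.length_map, List.length_range, List.getElem_map,
        List.getElem_range, Nat.mod_eq_of_lt h]
    · have hteq : t + 1 = b := by omega
      simp only [hl, List.length_map, List.length_range, List.getElem_map,
        List.getElem_range, hteq, Nat.mod_self]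
      exact hcyc.symm
  have hfix : ∀ j : Fin n, j ∉ l → σ j = j := fun j hj =>
    List.formPerm_apply_of_notMem hj
  have himg : l.toFinset = (Finset.range b).image g := by
    ext x
    simp [hl, List.mem_range, Finset.mem_image]
  calc ∑ t ∈ Finset.range b, c (g t) (g (t + 1))
      = ∑ t ∈ Finset.range b, c (g t) (σ (g t)) := by
        refine Finset.sum_congr rfl fun t ht => ?_
        rw [happ t (Finset.mem_range.mp ht)]
    _ = ∑ j ∈ (Finset.range b).image g, c j (σ j) := by
        rw [Finset.sum_image]
        intro s hs t ht hst
        exact hinj s t (Finset.mem_range.mp hs) (Finset.mem_range.mp ht) hst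
    _ = ∑ j, c j (σ j) := by
        refine Finset.sum_subset (Finset.subset_univ _) ?_
        intro j _ hj
        rw [← himg] at hj
        rw [hfix j (by simpa using hj), hc]
    _ ≤ 0 := hLE σ

/-- every walk's weight is at most `p c` of its start -/
lemma walk_le (c : Fin n → Fin n → ℝ) (hc : ∀ i, c i i = 0)
    (hLE : ∀ σ : Equiv.Perm (Fin n), ∑ j, c j (σ j) ≤ 0) :
    ∀ k (g : ℕ → Fin n), W c g k ≤ p c (g 0) := by
  intro k
  induction k using Nat.strong_induction_on with
  | _ k ih =>
    intro g
    rcases le_or_gt k n with hk | hk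
    · -- short walk: its weight is in S
      set h : Fin (n + 1) → Fin n := fun t => g t with hh
      have hagree : ∀ t ≤ n, ext h t = g t := by
        intro t ht
        rw [ext_eq h ht]
      have hW : W c (ext h) k = W c g k := by
        unfold W
        refine Finset.sum_congr rfl fun t ht => ?_
        have ht' : t < k := Finset.mem_range.mp ht
        rw [hagree t (by omega), hagree (t + 1) (by omega)]
      have hmem : W c g k ∈ S c (g 0) := by
        rw [← hW]
        refine Finset.mem_image.mpr ⟨(k, h), ?_, ?_⟩
        · simp [Finset.mem_product, Nat.lt_succ_of_le hk]
        · rw [if_pos (hagree 0 (Nat.zero_le n))]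
      exact Finset.le_max' _ _ (Finset.mem_insert_of_mem hmem)
    · -- long walk: shorten by removing a nonpositive cycle
      classical
      have hcard : Fintype.card (Fin n) < Fintype.card (Fin (n + 1)) := by simp
      obtain ⟨s, t, hst, heq⟩ :=
        Fintype.exists_ne_map_eq_of_card_lt (fun t : Fin (n + 1) => g t) hcard
      have hPex : ∃ b, ∃ a, a < b ∧ g a = g b := by
        rcases Nat.lt_or_ge (s : ℕ) (t : ℕ) with hlt | hge
        · exact ⟨t, s, hlt, heq⟩
        · have hlt : (t : ℕ) < (s : ℕ) := by
            rcases Nat.lt_or_ge (t : ℕ) (s : ℕ) with h' | h'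
            · exact h'
            · exact absurd (Fin.ext (by omega)) hst
          exact ⟨s, t, hlt, heq.symm⟩
      set B := Nat.find hPex with hBdef
      obtain ⟨a, haB, hgaB⟩ : ∃ a, a < B ∧ g a = g B := Nat.find_spec hPex
      have hBn : B ≤ n := by
        have hle : B ≤ max (s : ℕ) (t : ℕ) := by
          apply Nat.find_min' hPex
          rcases Nat.lt_or_ge (s : ℕ) (t : ℕ) with hlt | hge
          · exact ⟨s, by omega, by
              have : max (s : ℕ) (t : ℕ) = (t : ℕ) := Nat.max_eq_right (le_of_lt hlt)
              rw [this]; exact heq⟩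
          · have hlt : (t : ℕ) < (s : ℕ) := by
              rcases Nat.lt_or_ge (t : ℕ) (s : ℕ) with h' | h'
              · exact h'
              · exact absurd (Fin.ext (by omega)) hst
            exact ⟨t, by omega, by
              have : max (s : ℕ) (t : ℕ) = (s : ℕ) := Nat.max_eq_left (le_of_lt hlt)
              rw [this]; exact heq.symm⟩
        have hs : (s : ℕ) ≤ n := by omega
        have ht : (t : ℕ) ≤ n := by omega
        omega
      have hinjB : ∀ u w, u < B → w < B → g u = g w → u = w := by
        intro u w hu hw huw
        by_contra hne
        rcases Nat.lt_or_ge u w with h' | h'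
        · exact Nat.find_min hPex hw ⟨u, h', huw⟩
        · have hwu : w < u := by omega
          exact Nat.find_min hPex hu ⟨w, hwu, huw.symm⟩
      set d := B - a with hd
      have hd1 : 1 ≤ d := by omega
      set e : ℕ → ℝ := fun t => c (g t) (g (t + 1)) with he
      have hcycsum : ∑ t ∈ Finset.Ico a B, e t ≤ 0 := by
        have hcyc := cycle_nonpos c hc hLE (fun t => g (a + t)) d (by omega)
          (fun u w hu hw huw => by
            have := hinjB (a + u) (a + w) (by omega) (by omega) huw
            omega)
          (by
            show g (a + d) = g (a + 0)
            have h1 : a + d = B := by omega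
            rw [h1, Nat.add_zero]; exact hgaB.symm)
        rw [Finset.sum_Ico_eq_sum_range]
        calc ∑ i ∈ Finset.range (B - a), e (a + i)
            = ∑ t ∈ Finset.range d, c (g (a + t)) (g (a + (t + 1))) := by
              refine Finset.sum_congr rfl fun i _ => ?_
              have h1 : a + i + 1 = a + (i + 1) := by omega
              simp only [he, h1]
          _ ≤ 0 := hcyc
      set g₂ : ℕ → Fin n := fun t => if t < a then g t else g (t + d) with hg2
      have hg20 : g₂ 0 = g 0 := by
        by_cases h0 : 0 < a
        · simp [hg2, h0]
        · have ha0 : a = 0 := by omega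
          have h1 : g₂ 0 = g (0 + d) := by simp [hg2, ha0]
          have h2 : (0 : ℕ) + d = B := by omega
          rw [h1, h2, ← hgaB, ha0]
      have hak : a ≤ k - d := by omega
      have hBk : B ≤ k := by omega
      have e1 : ∀ t ∈ Finset.range a, c (g₂ t) (g₂ (t + 1)) = e t := by
        intro t ht
        have ht' : t < a := Finset.mem_range.mp ht
        have h1 : g₂ t = g t := by simp [hg2, ht']
        rcases Nat.lt_or_ge (t + 1) a with h2 | h2
        · simp [he, hg2, ht', h2]
        · have hta : t + 1 = a := by omega
          have h3 : g₂ (t + 1) = g (t + 1 + d) := by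
            simp [hg2, hta]
          have h4 : t + 1 + d = B := by omega
          simp only [he, h1, h3, h4, hgaB.symm]
          rw [hta]
      have e2 : ∀ t, a ≤ t → c (g₂ t) (g₂ (t + 1)) = e (t + d) := by
        intro t ht
        have h1 : g₂ t = g (t + d) := by simp [hg2, Nat.not_lt.mpr ht]
        have h2 : g₂ (t + 1) = g (t + 1 + d) := by
          have : ¬ t + 1 < a := by omega
          simp [hg2, this]
        have h3 : t + 1 + d = t + d + 1 := by omega
        simp only [he, h1, h2, h3]
      have A3 : W c g₂ (k - d) =
          (∑ t ∈ Finset.range a, c (g₂ t) (g₂ (t + 1))) +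
            ∑ t ∈ Finset.Ico a (k - d), c (g₂ t) (g₂ (t + 1)) := by
        unfold W
        rw [Finset.range_eq_Ico, ← Finset.sum_Ico_consecutive _ (Nat.zero_le a) hak,
          ← Finset.range_eq_Ico]
      have A1 : ∑ t ∈ Finset.range a, c (g₂ t) (g₂ (t + 1)) = ∑ t ∈ Finset.range a, e t :=
        Finset.sum_congr rfl e1
      have A2 : ∑ t ∈ Finset.Ico a (k - d), c (g₂ t) (g₂ (t + 1)) =
          ∑ t ∈ Finset.Ico B k, e t := by
        rw [Finset.sum_Ico_eq_sum_range, Finset.sum_Ico_eq_sum_range]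
        have hlen : k - d - a = k - B := by omega
        rw [hlen]
        refine Finset.sum_congr rfl fun i _ => ?_
        rw [e2 (a + i) (by omega)]
        have : a + i + d = B + i := by omega
        rw [this]
      have A4 : W c g k =
          (∑ t ∈ Finset.range a, e t) + (∑ t ∈ Finset.Ico a B, e t) +
            ∑ t ∈ Finset.Ico B k, e t := by
        unfold W
        rw [Finset.range_eq_Ico,
          ← Finset.sum_Ico_consecutive (fun t => c (g t) (g (t + 1))) (Nat.zero_le B) hBk,
          ← Finset.sum_Ico_consecutive (fun t => c (g t) (g (t + 1))) (Nat.zero_le a)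
            (le_of_lt haB),
          ← Finset.range_eq_Ico]
      have hih := ih (k - d) (by omega) g₂
      rw [hg20] at hih
      rw [A3, A1, A2] at hih
      rw [A4]
      linarith
/-- the key envy-freeness inequality for `p` -/
lemma p_ef (c : Fin n → Fin n → ℝ) (hc : ∀ i, c i i = 0)
    (hLE : ∀ σ : Equiv.Perm (Fin n), ∑ j, c j (σ j) ≤ 0) (i j : Fin n) :
    c i j + p c j ≤ p c i := by
  have hstep : c i j + 0 ≤ p c i := by
    set g : ℕ → Fin n := fun t => if t = 0 then i else j with hg
    have h1 : W c g 1 = c i j := by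
      unfold W
      rw [Finset.sum_range_one]
      simp [hg]
    have := walk_le c hc hLE 1 g
    rw [h1] at this
    simpa [hg] using this
  have hmax : p c j ∈ insert (0 : ℝ) (S c j) := Finset.max'_mem _ _
  rcases Finset.mem_insert.mp hmax with h0 | hS
  · rw [h0]; exact hstep
  · obtain ⟨⟨k, h⟩, hq, hval⟩ := Finset.mem_image.mp hS
    by_cases hcond : ext h 0 = j
    · rw [if_pos hcond] at hval
      -- prepend i to the walk realizing p c j
      set g : ℕ → Fin n := fun t => if t = 0 then i else ext h (t - 1) with hg
      have hW : W c g (k + 1) = c i j + W c (ext h) k := by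
        unfold W
        rw [Finset.sum_range_succ']
        have hf0 : c (g 0) (g 1) = c i j := by
          simp [hg, hcond]
        have hft : ∀ t ∈ Finset.range k,
            c (g (t + 1)) (g (t + 1 + 1)) = c (ext h t) (ext h (t + 1)) := by
          intro t _
          simp [hg]
        rw [hf0, Finset.sum_congr rfl hft]
        ring
      have := walk_le c hc hLE (k + 1) g
      rw [hW] at this
      have hg0 : g 0 = i := by simp [hg]
      rw [hg0] at this
      rw [← hval]
      exact this
    · rw [if_neg hcond] at hval
      rw [← hval]
      exact hstep

end EnvyFree

open Finset

/-- An allocation with monotone normalized valuations is envy-freeable (there is a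
nonnegative subsidy vector making it envy-free) iff it is locally efficient. -/
theorem envy_freeable_iff_locally_efficient (n m : ℕ)
    (v : Fin n → Finset (Fin m) → ℝ)
    (hnonneg : ∀ i S, 0 ≤ v i S)
    (hmono : ∀ i, ∀ S T : Finset (Fin m), S ⊆ T → v i S ≤ v i T)
    (hnorm : ∀ i, v i ∅ = 0)
    (X : Fin n → Finset (Fin m))
    (hdisj : ∀ i j, i ≠ j → Disjoint (X i) (X j))
    (hcover : (Finset.univ : Finset (Fin n)).biUnion X = Finset.univ) :
    (∃ p : Fin n → ℝ, (∀ i, 0 ≤ p i) ∧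
        ∀ i j, v i (X j) + p j ≤ v i (X i) + p i) ↔
      (∀ π : Equiv.Perm (Fin n), ∑ i, v (π i) (X i) ≤ ∑ i, v i (X i)) := by
  constructor
  · rintro ⟨p, hp0, hEF⟩ π
    have h1 : ∑ i, (v (π i) (X i) + p i) ≤ ∑ i, (v (π i) (X (π i)) + p (π i)) :=
      Finset.sum_le_sum fun i _ => hEF (π i) i
    have h2 : ∑ i, (v (π i) (X (π i)) + p (π i)) = ∑ i, (v i (X i) + p i) :=
      Equiv.sum_comp π (fun i => v i (X i) + p i)
    rw [h2, Finset.sum_add_distrib, Finset.sum_add_distrib] at h1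
    linarith
  · intro hloc
    set c : Fin n → Fin n → ℝ := fun i j => v i (X j) - v i (X i) with hcdef
    have hc : ∀ i, c i i = 0 := by intro i; simp [hcdef]
    have hLE : ∀ σ : Equiv.Perm (Fin n), ∑ j, c j (σ j) ≤ 0 := by
      intro σ
      have h := hloc σ⁻¹
      have h2 : ∑ j, v (σ⁻¹ (σ j)) (X (σ j)) = ∑ i, v (σ⁻¹ i) (X i) :=
        Equiv.sum_comp σ (fun i => v (σ⁻¹ i) (X i))
      simp only [Equiv.Perm.inv_def, Equiv.symm_apply_apply] at h2
      have h3 : ∑ j, v j (X (σ j)) ≤ ∑ j, v j (X j) := by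
        rw [h2]
        simpa using h
      have h4 : ∑ j, c j (σ j) = (∑ j, v j (X (σ j))) - ∑ j, v j (X j) := by
        simp [hcdef, Finset.sum_sub_distrib]
      linarith
    refine ⟨EnvyFree.p c, fun i => EnvyFree.p_nonneg c i, fun i j => ?_⟩
    have := EnvyFree.p_ef c hc hLE i j
    have hcij : c i j = v i (X j) - v i (X i) := rfl
    rw [hcij] at this
    linarith
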